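/- There exists a universal constant c > 0 such that for every function u : V* → ℝ with E(u,u) := sup_n E_n(u,u) < +∞ and all x, y ∈ V* with x ≠ y, one has |u(y) − u(x)| ≤ c · E(u,u)^{1/2} · |y − x|^α, where α = log(5/3)/(2 log 2) and |y − x| is the Euclidean distance in ℝ². -/

import Mathlib

open scoped Classical
open Real Set

noncomputable section

abbrev Pt : Type := ℝ × ℝ

/-- The three corners of the unit triangle. -/
def sierA : Fin 3 → Pt
  | 0 => (0, 0)
  | 1 => (1 / 2, Real.sqrt 3 / 2)
  | 2 => (1, 0)

/-- The three contractions `φᵢ(x) = (x + aᵢ)/2`. -/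
def ctr (i : Fin 3) (x : Pt) : Pt :=
  ((x.1 + (sierA i).1) / 2, (x.2 + (sierA i).2) / 2)

/-- The vertex sets `V n`. -/
def V : ℕ → Finset Pt
  | 0 => {sierA 0, sierA 1, sierA 2}
  | n + 1 => (V n).image (ctr 0) ∪ (V n).image (ctr 1) ∪ (V n).image (ctr 2)

/-- The (ordered) edge sets: `(x, y) ∈ Ed n` iff `{x,y} ∈ E_n`; each undirected
edge appears with both orientations. -/
def Ed : ℕ → Finset (Pt × Pt)
  | 0 => (V 0 ×ˢ V 0).filter fun p => p.1 ≠ p.2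
  | n + 1 => Finset.univ.biUnion fun i : Fin 3 => (Ed n).image fun p => (ctr i p.1, ctr i p.2)

/-- `V* = ⋃ n, V n`. -/
def Vstar : Set Pt := ⋃ n, (V n : Set Pt)

/-- The level-`n` energy `E_n(u,u) = (5/3)^n Σ_{{x,y} ∈ E_n} (u y - u x)²`
(each undirected edge counted once, whence the division by 2). -/
def En (n : ℕ) (u : Pt → ℝ) : ℝ :=
  (5 / 3 : ℝ) ^ n * (∑ p ∈ Ed n, (u p.2 - u p.1) ^ 2) / 2

/-- The discrete Laplacian `Δ_n u (x) = 5^n Σ_{y ∼ₙ x} (u y - u x)`. -/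
def lap (n : ℕ) (u : Pt → ℝ) (x : Pt) : ℝ :=
  (5 : ℝ) ^ n * ∑ p ∈ (Ed n).filter (fun p => p.1 = x), (u p.2 - u p.1)

/-- Euclidean distance in ℝ². -/
def eucl (x y : Pt) : ℝ := Real.sqrt ((y.1 - x.1) ^ 2 + (y.2 - x.2) ^ 2)

namespace SG

lemma s3_sq : Real.sqrt 3 ^ 2 = 3 := Real.sq_sqrt (by norm_num)
def d2 (x y : Pt) : ℝ := (y.1 - x.1) ^ 2 + (y.2 - x.2) ^ 2
def T : Set Pt := {p | ∃ l0 l1 l2 : ℝ, 0 ≤ l0 ∧ 0 ≤ l1 ∧ 0 ≤ l2 ∧ l0 + l1 + l2 = 1 ∧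
  p.1 = l1 / 2 + l2 ∧ p.2 = Real.sqrt 3 * l1 / 2}


lemma d2_nonneg (x y : Pt) : 0 ≤ d2 x y := by unfold d2; positivity

lemma d2_symm (x y : Pt) : d2 x y = d2 y x := by unfold d2; ring

lemma eucl_eq_sqrt_d2 (x y : Pt) : eucl x y = Real.sqrt (d2 x y) := rfl

lemma sierA_mem_T (i : Fin 3) : sierA i ∈ T := by
  fin_cases i
  · exact ⟨1, 0, 0, by norm_num, by norm_num, by norm_num, by norm_num,
      by simp [sierA], by simp [sierA]⟩
  · exact ⟨0, 1, 0, by norm_num, by norm_num, by norm_num, by norm_num,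
      by simp [sierA], by simp [sierA]⟩
  · exact ⟨0, 0, 1, by norm_num, by norm_num, by norm_num, by norm_num,
      by simp [sierA], by simp [sierA]⟩

lemma ctr_mem_T {p : Pt} (i : Fin 3) (hp : p ∈ T) : ctr i p ∈ T := by
  obtain ⟨l0, l1, l2, h0, h1, h2, hs, hx, hy⟩ := hp
  fin_cases i
  · exact ⟨(l0 + 1) / 2, l1 / 2, l2 / 2, by linarith, by linarith, by linarith, by linarith,
      by simp [ctr, sierA, hx]; ring, by simp [ctr, sierA, hy]; ring⟩
  · exact ⟨l0 / 2, (l1 + 1) / 2, l2 / 2, by linarith, by linarith, by linarith, by linarith,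
      by simp [ctr, sierA, hx]; ring, by simp [ctr, sierA, hy]; ring⟩
  · exact ⟨l0 / 2, l1 / 2, (l2 + 1) / 2, by linarith, by linarith, by linarith, by linarith,
      by simp [ctr, sierA, hx]; ring, by simp [ctr, sierA, hy]; ring⟩

lemma ctr_fix (i : Fin 3) : ctr i (sierA i) = sierA i := by
  fin_cases i <;> simp [ctr, sierA]

lemma d2_ctr (i : Fin 3) (x y : Pt) : d2 (ctr i x) (ctr i y) = d2 x y / 4 := by
  unfold d2 ctr; ring

lemma mid_eq (c c' : Fin 3) : ctr c (sierA c') = ctr c' (sierA c) := by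
  unfold ctr; simp [add_comm]

def Phi (w : List (Fin 3)) (x : Pt) : Pt := w.foldr ctr x

@[simp] lemma Phi_nil (x : Pt) : Phi [] x = x := rfl
@[simp] lemma Phi_cons (c : Fin 3) (w : List (Fin 3)) (x : Pt) :
    Phi (c :: w) x = ctr c (Phi w x) := rfl

lemma Phi_append (w v : List (Fin 3)) (x : Pt) : Phi (w ++ v) x = Phi w (Phi v x) :=
  List.foldr_append

lemma Phi_mem_T {p : Pt} (w : List (Fin 3)) (hp : p ∈ T) : Phi w p ∈ T := by
  induction w with
  | nil => exact hp
  | cons c w ih => exact ctr_mem_T c ih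

lemma d2_Phi (w : List (Fin 3)) (x y : Pt) :
    d2 (Phi w x) (Phi w y) = d2 x y / 4 ^ w.length := by
  induction w with
  | nil => simp
  | cons c w ih =>
    simp only [Phi_cons, d2_ctr, ih, List.length_cons, pow_succ]
    ring
lemma d2_bary {p q : Pt} {m1 m2 n1 n2 : ℝ} (hpx : p.1 = m1 / 2 + m2)
    (hpy : p.2 = Real.sqrt 3 * m1 / 2)
    (hqx : q.1 = n1 / 2 + n2) (hqy : q.2 = Real.sqrt 3 * n1 / 2) :
    d2 p q = (n1 - m1) ^ 2 + (n1 - m1) * (n2 - m2) + (n2 - m2) ^ 2 := by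
  unfold d2; rw [hpx, hpy, hqx, hqy]; linear_combination ((n1 - m1) ^ 2 / 4) * s3_sq

lemma diam_T {p q : Pt} (hp : p ∈ T) (hq : q ∈ T) : d2 p q ≤ 1 := by
  obtain ⟨l0, l1, l2, h0, h1, h2, hs, hx, hy⟩ := hp
  obtain ⟨m0, m1, m2, g0, g1, g2, gs, gx, gy⟩ := hq
  rw [d2_bary hx hy gx gy]
  nlinarith [mul_nonneg h0 g0, mul_nonneg h1 g1, mul_nonneg h2 g2,
    mul_nonneg h0 (by linarith : (0:ℝ) ≤ 1 - l0), mul_nonneg h1 (by linarith : (0:ℝ) ≤ 1 - l1),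
    mul_nonneg h2 (by linarith : (0:ℝ) ≤ 1 - l2), mul_nonneg g0 (by linarith : (0:ℝ) ≤ 1 - m0),
    mul_nonneg g1 (by linarith : (0:ℝ) ≤ 1 - m1), mul_nonneg g2 (by linarith : (0:ℝ) ≤ 1 - m2)]

lemma corner_far {c j : Fin 3} (hcj : c ≠ j) {P : Pt} (hP : P ∈ T) :
    1 / 4 ≤ d2 (ctr c P) (sierA j) := by
  obtain ⟨l0, l1, l2, h0, h1, h2, hs, hx, hy⟩ := hP
  fin_cases c <;> fin_cases j
  · exact absurd rfl hcj
  · show (1:ℝ) / 4 ≤ d2 (ctr 0 P) (sierA 1)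
    have hp1 : (ctr 0 P).1 = ((l1)/2) / 2 + ((l2)/2) := by
      simp only [ctr, sierA]; rw [hx]; ring
    have hp2 : (ctr 0 P).2 = Real.sqrt 3 * ((l1)/2) / 2 := by
      simp only [ctr, sierA]; rw [hy]; ring
    have hq1 : (sierA 1).1 = (1) / 2 + (0) := by norm_num [sierA]
    have hq2 : (sierA 1).2 = Real.sqrt 3 * (1) / 2 := by norm_num [sierA]
    rw [d2_bary hp1 hp2 hq1 hq2]
    nlinarith [mul_nonneg h0 h2, sq_nonneg l0, sq_nonneg l2, h0, h2]
  · show (1:ℝ) / 4 ≤ d2 (ctr 0 P) (sierA 2)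
    have hp1 : (ctr 0 P).1 = ((l1)/2) / 2 + ((l2)/2) := by
      simp only [ctr, sierA]; rw [hx]; ring
    have hp2 : (ctr 0 P).2 = Real.sqrt 3 * ((l1)/2) / 2 := by
      simp only [ctr, sierA]; rw [hy]; ring
    have hq1 : (sierA 2).1 = (0) / 2 + (1) := by norm_num [sierA]
    have hq2 : (sierA 2).2 = Real.sqrt 3 * (0) / 2 := by norm_num [sierA]
    rw [d2_bary hp1 hp2 hq1 hq2]
    nlinarith [mul_nonneg h0 h1, sq_nonneg l0, sq_nonneg l1, h0, h1]
  · show (1:ℝ) / 4 ≤ d2 (ctr 1 P) (sierA 0)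
    have hp1 : (ctr 1 P).1 = (((l1)+1)/2) / 2 + ((l2)/2) := by
      simp only [ctr, sierA]; rw [hx]; ring
    have hp2 : (ctr 1 P).2 = Real.sqrt 3 * (((l1)+1)/2) / 2 := by
      simp only [ctr, sierA]; rw [hy]; ring
    have hq1 : (sierA 0).1 = (0) / 2 + (0) := by norm_num [sierA]
    have hq2 : (sierA 0).2 = Real.sqrt 3 * (0) / 2 := by norm_num [sierA]
    rw [d2_bary hp1 hp2 hq1 hq2]
    nlinarith [mul_nonneg h1 h2, sq_nonneg l1, sq_nonneg l2, h1, h2]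
  · exact absurd rfl hcj
  · show (1:ℝ) / 4 ≤ d2 (ctr 1 P) (sierA 2)
    have hp1 : (ctr 1 P).1 = (((l1)+1)/2) / 2 + ((l2)/2) := by
      simp only [ctr, sierA]; rw [hx]; ring
    have hp2 : (ctr 1 P).2 = Real.sqrt 3 * (((l1)+1)/2) / 2 := by
      simp only [ctr, sierA]; rw [hy]; ring
    have hq1 : (sierA 2).1 = (0) / 2 + (1) := by norm_num [sierA]
    have hq2 : (sierA 2).2 = Real.sqrt 3 * (0) / 2 := by norm_num [sierA]
    rw [d2_bary hp1 hp2 hq1 hq2]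
    nlinarith [mul_nonneg h1 h0, sq_nonneg l1, sq_nonneg l0, h1, h0]
  · show (1:ℝ) / 4 ≤ d2 (ctr 2 P) (sierA 0)
    have hp1 : (ctr 2 P).1 = ((l1)/2) / 2 + (((l2)+1)/2) := by
      simp only [ctr, sierA]; rw [hx]; ring
    have hp2 : (ctr 2 P).2 = Real.sqrt 3 * ((l1)/2) / 2 := by
      simp only [ctr, sierA]; rw [hy]; ring
    have hq1 : (sierA 0).1 = (0) / 2 + (0) := by norm_num [sierA]
    have hq2 : (sierA 0).2 = Real.sqrt 3 * (0) / 2 := by norm_num [sierA]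
    rw [d2_bary hp1 hp2 hq1 hq2]
    nlinarith [mul_nonneg h2 h1, sq_nonneg l2, sq_nonneg l1, h2, h1]
  · show (1:ℝ) / 4 ≤ d2 (ctr 2 P) (sierA 1)
    have hp1 : (ctr 2 P).1 = ((l1)/2) / 2 + (((l2)+1)/2) := by
      simp only [ctr, sierA]; rw [hx]; ring
    have hp2 : (ctr 2 P).2 = Real.sqrt 3 * ((l1)/2) / 2 := by
      simp only [ctr, sierA]; rw [hy]; ring
    have hq1 : (sierA 1).1 = (1) / 2 + (0) := by norm_num [sierA]
    have hq2 : (sierA 1).2 = Real.sqrt 3 * (1) / 2 := by norm_num [sierA]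
    rw [d2_bary hp1 hp2 hq1 hq2]
    nlinarith [mul_nonneg h2 h0, sq_nonneg l2, sq_nonneg l0, h2, h0]
  · exact absurd rfl hcj

lemma keyineq {a b g d : ℝ} (ha : 0 ≤ a) (hb : 0 ≤ b) (hg : 0 ≤ g) (hd : 0 ≤ d) :
    3 * ((a^2+a*b+b^2)/4) ≤
      4 * ((a^2+a*b+b^2)/4 + (g^2+g*d+d^2)/4 + (2*a*g+a*d+b*g-b*d)/4) := by
  nlinarith [sq_nonneg (b-2*d), mul_nonneg ha hb, mul_nonneg hg hd, mul_nonneg ha hg,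
    mul_nonneg ha hd, mul_nonneg hb hg]

lemma cone {c c' : Fin 3} (hcc : c ≠ c') {P Q : Pt} (hP : P ∈ T) (hQ : Q ∈ T) :
    3 * d2 (ctr c P) (ctr c (sierA c')) ≤ 4 * d2 (ctr c P) (ctr c' Q) := by
  obtain ⟨l0, l1, l2, h0, h1, h2, hs, hx, hy⟩ := hP
  obtain ⟨m0, m1, m2, g0, g1, g2, gs, gx, gy⟩ := hQ
  have hl0 : l0 = 1 - l1 - l2 := by linarith
  have hm0 : m0 = 1 - m1 - m2 := by linarith
  subst hl0; subst hm0
  fin_cases c <;> fin_cases c'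
  · exact absurd rfl hcc
  · show 3 * d2 (ctr 0 P) (ctr 0 (sierA 1)) ≤ 4 * d2 (ctr 0 P) (ctr 1 Q)
    have hp1 : (ctr 0 P).1 = ((l1)/2) / 2 + ((l2)/2) := by
      simp only [ctr, sierA]; rw [hx]; ring
    have hp2 : (ctr 0 P).2 = Real.sqrt 3 * ((l1)/2) / 2 := by
      simp only [ctr, sierA]; rw [hy]; ring
    have hv1 : (ctr 0 (sierA 1)).1 = ((1)/2) / 2 + ((0)/2) := by norm_num [ctr, sierA]
    have hv2 : (ctr 0 (sierA 1)).2 = Real.sqrt 3 * ((1)/2) / 2 := by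
      norm_num [ctr, sierA]; try ring
    have hq1 : (ctr 1 Q).1 = (((m1)+1)/2) / 2 + ((m2)/2) := by
      simp only [ctr, sierA]; rw [gx]; ring
    have hq2 : (ctr 1 Q).2 = Real.sqrt 3 * (((m1)+1)/2) / 2 := by
      simp only [ctr, sierA]; rw [gy]; ring
    rw [d2_bary hp1 hp2 hv1 hv2, d2_bary hp1 hp2 hq1 hq2]
    have key := keyineq h0 h2 g1 g2
    linarith [key]
  · show 3 * d2 (ctr 0 P) (ctr 0 (sierA 2)) ≤ 4 * d2 (ctr 0 P) (ctr 2 Q)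
    have hp1 : (ctr 0 P).1 = ((l1)/2) / 2 + ((l2)/2) := by
      simp only [ctr, sierA]; rw [hx]; ring
    have hp2 : (ctr 0 P).2 = Real.sqrt 3 * ((l1)/2) / 2 := by
      simp only [ctr, sierA]; rw [hy]; ring
    have hv1 : (ctr 0 (sierA 2)).1 = ((0)/2) / 2 + ((1)/2) := by norm_num [ctr, sierA]
    have hv2 : (ctr 0 (sierA 2)).2 = Real.sqrt 3 * ((0)/2) / 2 := by
      norm_num [ctr, sierA]; try ring
    have hq1 : (ctr 2 Q).1 = ((m1)/2) / 2 + (((m2)+1)/2) := by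
      simp only [ctr, sierA]; rw [gx]; ring
    have hq2 : (ctr 2 Q).2 = Real.sqrt 3 * ((m1)/2) / 2 := by
      simp only [ctr, sierA]; rw [gy]; ring
    rw [d2_bary hp1 hp2 hv1 hv2, d2_bary hp1 hp2 hq1 hq2]
    have key := keyineq h0 h1 g2 g1
    linarith [key]
  · show 3 * d2 (ctr 1 P) (ctr 1 (sierA 0)) ≤ 4 * d2 (ctr 1 P) (ctr 0 Q)
    have hp1 : (ctr 1 P).1 = (((l1)+1)/2) / 2 + ((l2)/2) := by
      simp only [ctr, sierA]; rw [hx]; ring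
    have hp2 : (ctr 1 P).2 = Real.sqrt 3 * (((l1)+1)/2) / 2 := by
      simp only [ctr, sierA]; rw [hy]; ring
    have hv1 : (ctr 1 (sierA 0)).1 = (((0)+1)/2) / 2 + ((0)/2) := by norm_num [ctr, sierA]
    have hv2 : (ctr 1 (sierA 0)).2 = Real.sqrt 3 * (((0)+1)/2) / 2 := by
      norm_num [ctr, sierA]; try ring
    have hq1 : (ctr 0 Q).1 = ((m1)/2) / 2 + ((m2)/2) := by
      simp only [ctr, sierA]; rw [gx]; ring
    have hq2 : (ctr 0 Q).2 = Real.sqrt 3 * ((m1)/2) / 2 := by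
      simp only [ctr, sierA]; rw [gy]; ring
    rw [d2_bary hp1 hp2 hv1 hv2, d2_bary hp1 hp2 hq1 hq2]
    have key := keyineq h1 h2 g0 g2
    linarith [key]
  · exact absurd rfl hcc
  · show 3 * d2 (ctr 1 P) (ctr 1 (sierA 2)) ≤ 4 * d2 (ctr 1 P) (ctr 2 Q)
    have hp1 : (ctr 1 P).1 = (((l1)+1)/2) / 2 + ((l2)/2) := by
      simp only [ctr, sierA]; rw [hx]; ring
    have hp2 : (ctr 1 P).2 = Real.sqrt 3 * (((l1)+1)/2) / 2 := by
      simp only [ctr, sierA]; rw [hy]; ring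
    have hv1 : (ctr 1 (sierA 2)).1 = (((0)+1)/2) / 2 + ((1)/2) := by norm_num [ctr, sierA]
    have hv2 : (ctr 1 (sierA 2)).2 = Real.sqrt 3 * (((0)+1)/2) / 2 := by
      norm_num [ctr, sierA]; try ring
    have hq1 : (ctr 2 Q).1 = ((m1)/2) / 2 + (((m2)+1)/2) := by
      simp only [ctr, sierA]; rw [gx]; ring
    have hq2 : (ctr 2 Q).2 = Real.sqrt 3 * ((m1)/2) / 2 := by
      simp only [ctr, sierA]; rw [gy]; ring
    rw [d2_bary hp1 hp2 hv1 hv2, d2_bary hp1 hp2 hq1 hq2]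
    have key := keyineq h1 h0 g2 g0
    linarith [key]
  · show 3 * d2 (ctr 2 P) (ctr 2 (sierA 0)) ≤ 4 * d2 (ctr 2 P) (ctr 0 Q)
    have hp1 : (ctr 2 P).1 = ((l1)/2) / 2 + (((l2)+1)/2) := by
      simp only [ctr, sierA]; rw [hx]; ring
    have hp2 : (ctr 2 P).2 = Real.sqrt 3 * ((l1)/2) / 2 := by
      simp only [ctr, sierA]; rw [hy]; ring
    have hv1 : (ctr 2 (sierA 0)).1 = ((0)/2) / 2 + (((0)+1)/2) := by norm_num [ctr, sierA]
    have hv2 : (ctr 2 (sierA 0)).2 = Real.sqrt 3 * ((0)/2) / 2 := by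
      norm_num [ctr, sierA]; try ring
    have hq1 : (ctr 0 Q).1 = ((m1)/2) / 2 + ((m2)/2) := by
      simp only [ctr, sierA]; rw [gx]; ring
    have hq2 : (ctr 0 Q).2 = Real.sqrt 3 * ((m1)/2) / 2 := by
      simp only [ctr, sierA]; rw [gy]; ring
    rw [d2_bary hp1 hp2 hv1 hv2, d2_bary hp1 hp2 hq1 hq2]
    have key := keyineq h2 h1 g0 g1
    linarith [key]
  · show 3 * d2 (ctr 2 P) (ctr 2 (sierA 1)) ≤ 4 * d2 (ctr 2 P) (ctr 1 Q)
    have hp1 : (ctr 2 P).1 = ((l1)/2) / 2 + (((l2)+1)/2) := by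
      simp only [ctr, sierA]; rw [hx]; ring
    have hp2 : (ctr 2 P).2 = Real.sqrt 3 * ((l1)/2) / 2 := by
      simp only [ctr, sierA]; rw [hy]; ring
    have hv1 : (ctr 2 (sierA 1)).1 = ((1)/2) / 2 + (((0)+1)/2) := by norm_num [ctr, sierA]
    have hv2 : (ctr 2 (sierA 1)).2 = Real.sqrt 3 * ((1)/2) / 2 := by
      norm_num [ctr, sierA]; try ring
    have hq1 : (ctr 1 Q).1 = (((m1)+1)/2) / 2 + ((m2)/2) := by
      simp only [ctr, sierA]; rw [gx]; ring
    have hq2 : (ctr 1 Q).2 = Real.sqrt 3 * (((m1)+1)/2) / 2 := by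
      simp only [ctr, sierA]; rw [gy]; ring
    rw [d2_bary hp1 hp2 hv1 hv2, d2_bary hp1 hp2 hq1 hq2]
    have key := keyineq h2 h0 g1 g0
    linarith [key]
  · exact absurd rfl hcc

lemma sierA_mem_V0 (i : Fin 3) : sierA i ∈ V 0 := by
  fin_cases i <;> simp [V]

lemma sierA_ne {i j : Fin 3} (h : i ≠ j) : sierA i ≠ sierA j := by
  fin_cases i <;> fin_cases j <;>
    simp_all [sierA, Prod.ext_iff] <;> norm_num

lemma mem_Ed_word : ∀ (w : List (Fin 3)) {i j : Fin 3}, i ≠ j →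
    (Phi w (sierA i), Phi w (sierA j)) ∈ Ed w.length
  | [], i, j, hij => by
    simp only [List.length_nil, Ed, Finset.mem_filter, Finset.mem_product, Phi_nil]
    exact ⟨⟨sierA_mem_V0 i, sierA_mem_V0 j⟩, sierA_ne hij⟩
  | c :: w, i, j, hij => by
    have h := mem_Ed_word w hij
    simp only [List.length_cons, Ed, Finset.mem_biUnion]
    exact ⟨c, Finset.mem_univ c, Finset.mem_image_of_mem _ h⟩

lemma exists_word_of_mem_V : ∀ (n : ℕ) {x : Pt}, x ∈ V n →
    ∃ (w : List (Fin 3)) (j : Fin 3), w.length = n ∧ x = Phi w (sierA j)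
  | 0, x, hx => by
    simp only [V, Finset.mem_insert, Finset.mem_singleton] at hx
    rcases hx with h | h | h
    · exact ⟨[], 0, rfl, h⟩
    · exact ⟨[], 1, rfl, h⟩
    · exact ⟨[], 2, rfl, h⟩
  | n + 1, x, hx => by
    simp only [V, Finset.mem_union, Finset.mem_image] at hx
    rcases hx with (⟨y, hy, rfl⟩ | ⟨y, hy, rfl⟩) | ⟨y, hy, rfl⟩
    · obtain ⟨w, j, hl, rfl⟩ := exists_word_of_mem_V n hy
      exact ⟨0 :: w, j, by simp [hl], rfl⟩
    · obtain ⟨w, j, hl, rfl⟩ := exists_word_of_mem_V n hy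
      exact ⟨1 :: w, j, by simp [hl], rfl⟩
    · obtain ⟨w, j, hl, rfl⟩ := exists_word_of_mem_V n hy
      exact ⟨2 :: w, j, by simp [hl], rfl⟩

lemma Phi_replicate (k : ℕ) (j : Fin 3) :
    Phi (List.replicate k j) (sierA j) = sierA j := by
  induction k with
  | zero => rfl
  | succ k ih => simp [List.replicate_succ, Phi_cons, ih, ctr_fix]

lemma exists_long_word {x : Pt} (hx : x ∈ Vstar) (N : ℕ) :
    ∃ (w : List (Fin 3)) (j : Fin 3), N ≤ w.length ∧ x = Phi w (sierA j) := by
  obtain ⟨s, ⟨n, rfl⟩, hxn⟩ := hx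
  obtain ⟨w, j, hl, rfl⟩ := exists_word_of_mem_V n hxn
  refine ⟨w ++ List.replicate N j, j, ?_, ?_⟩
  · simp [hl]
  · rw [Phi_append, Phi_replicate]

lemma sep_corner : ∀ (w : List (Fin 3)) {P : Pt}, P ∈ T → ∀ {j : Fin 3},
    d2 (Phi w P) (sierA j) < (1 / 4 : ℝ) ^ w.length → ∃ i, Phi w (sierA i) = sierA j
  | [], P, _, j, _ => ⟨j, rfl⟩
  | c :: w, P, hP, j, hd => by
    simp only [Phi_cons, List.length_cons] at hd
    by_cases hcj : c = j
    · subst hcj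
      have h4 : d2 (Phi w P) (sierA c) < (1 / 4 : ℝ) ^ w.length := by
        have := d2_ctr c (Phi w P) (sierA c)
        rw [ctr_fix] at this
        have hp : ((1:ℝ)/4) ^ (w.length + 1) = (1/4) ^ w.length / 4 := by
          rw [pow_succ]; ring
        rw [hp] at hd
        linarith
      obtain ⟨i, hi⟩ := sep_corner w hP h4
      exact ⟨i, by rw [Phi_cons, hi, ctr_fix]⟩
    · exfalso
      have h1 : 1 / 4 ≤ d2 (ctr c (Phi w P)) (sierA j) := corner_far hcj (Phi_mem_T w hP)
      have h2 : ((1:ℝ)/4) ^ (w.length + 1) ≤ (1/4) ^ 1 :=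
        pow_le_pow_of_le_one (by norm_num) (by norm_num) (Nat.succ_le_succ (Nat.zero_le _))
      simp only [pow_one] at h2
      linarith

lemma sep_cells : ∀ (w w' : List (Fin 3)), w.length = w'.length → ∀ {P Q : Pt}, P ∈ T → Q ∈ T →
    d2 (Phi w P) (Phi w' Q) < 3 / 4 * (1 / 4 : ℝ) ^ w.length →
    ∃ i i', Phi w (sierA i) = Phi w' (sierA i')
  | [], [], _, P, Q, _, _, _ => ⟨0, 0, rfl⟩
  | [], c' :: w', h, _, _, _, _, _ => by simp at h
  | c :: w, [], h, _, _, _, _, _ => by simp at h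
  | c :: w, c' :: w', hlen, P, Q, hP, hQ, hd => by
    have hlen' : w.length = w'.length := by simpa using hlen
    simp only [Phi_cons, List.length_cons] at hd
    by_cases hcc : c = c'
    · subst hcc
      have h4 : d2 (Phi w P) (Phi w' Q) < 3 / 4 * (1 / 4 : ℝ) ^ w.length := by
        have := d2_ctr c (Phi w P) (Phi w' Q)
        have hp : ((1:ℝ)/4) ^ (w.length + 1) = (1/4) ^ w.length / 4 := by
          rw [pow_succ]; ring
        rw [hp] at hd
        linarith
      obtain ⟨i, i', hii⟩ := sep_cells w w' hlen' hP hQ h4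
      exact ⟨i, i', by rw [Phi_cons, Phi_cons, hii]⟩
    · have hPT := Phi_mem_T w hP
      have hQT := Phi_mem_T w' hQ
      have hc1 := cone hcc hPT hQT
      have hc2 := cone (Ne.symm hcc) hQT hPT
      have hpow : ((1:ℝ)/4) ^ (w.length + 1) = (1/4) ^ w.length / 4 := by
        rw [pow_succ]; ring
      -- x-side
      have hx1 : d2 (Phi w P) (sierA c') < (1 / 4 : ℝ) ^ w.length := by
        have e := d2_ctr c (Phi w P) (sierA c')
        nlinarith [hc1, hd, hpow, d2_nonneg (ctr c (Phi w P)) (ctr c' (Phi w' Q))]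
      obtain ⟨i, hi⟩ := sep_corner w hP hx1
      -- y-side
      have hsymm : d2 (ctr c' (Phi w' Q)) (ctr c (Phi w P)) = d2 (ctr c (Phi w P)) (ctr c' (Phi w' Q)) :=
        d2_symm _ _
      have hx2 : d2 (Phi w' Q) (sierA c) < (1 / 4 : ℝ) ^ w'.length := by
        rw [← hlen']
        have e := d2_ctr c' (Phi w' Q) (sierA c)
        nlinarith [hc2, hd, hpow, hsymm]
      obtain ⟨i', hi'⟩ := sep_corner w' hQ hx2
      refine ⟨i, i', ?_⟩
      rw [Phi_cons, Phi_cons, hi, hi', mid_eq]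

/-! ### energy and oscillation -/

def r : ℝ := Real.sqrt (3 / 5)

lemma r_nonneg : 0 ≤ r := Real.sqrt_nonneg _
lemma r_sq : r ^ 2 = 3 / 5 := Real.sq_sqrt (by norm_num)
lemma r_le : r ≤ 4 / 5 := by nlinarith [r_sq, r_nonneg, sq_nonneg (r - 4/5)]
lemma r_ge : 3 / 4 ≤ r := by nlinarith [r_sq, r_nonneg, sq_nonneg (r - 4/5)]

lemma En_nonneg (n : ℕ) (u : Pt → ℝ) : 0 ≤ En n u := by
  unfold En
  have : (0:ℝ) ≤ ∑ p ∈ Ed n, (u p.2 - u p.1) ^ 2 :=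
    Finset.sum_nonneg fun p _ => sq_nonneg _
  positivity

lemma edge_osc {u : Pt → ℝ} {S : ℝ} (hES : ∀ n, En n u ≤ S)
    (w : List (Fin 3)) {i j : Fin 3} (hij : i ≠ j) :
    |u (Phi w (sierA j)) - u (Phi w (sierA i))| ≤
      Real.sqrt 2 * Real.sqrt S * r ^ w.length := by
  set n := w.length with hn
  have hS0 : 0 ≤ S := le_trans (En_nonneg 0 u) (hES 0)
  have hmem := mem_Ed_word w hij
  have hsum : (u (Phi w (sierA j)) - u (Phi w (sierA i))) ^ 2 ≤
      ∑ p ∈ Ed n, (u p.2 - u p.1) ^ 2 := by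
    have h := Finset.single_le_sum (f := fun p : Pt × Pt => (u p.2 - u p.1) ^ 2)
      (fun p _ => sq_nonneg _) hmem
    simpa using h
  have hEn : ∑ p ∈ Ed n, (u p.2 - u p.1) ^ 2 = 2 * (3/5 : ℝ) ^ n * En n u := by
    unfold En
    have h1 : (3/5 : ℝ) ^ n * (5/3 : ℝ) ^ n = 1 := by rw [← mul_pow]; norm_num
    linear_combination (-(∑ p ∈ Ed n, (u p.2 - u p.1) ^ 2)) * h1
  have hb : (u (Phi w (sierA j)) - u (Phi w (sierA i))) ^ 2 ≤ 2 * (3/5 : ℝ) ^ n * S := by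
    have h2 : 2 * (3/5 : ℝ) ^ n * En n u ≤ 2 * (3/5 : ℝ) ^ n * S := by
      have : (0:ℝ) ≤ 2 * (3/5 : ℝ) ^ n := by positivity
      exact mul_le_mul_of_nonneg_left (hES n) this
    linarith [hsum, hEn ▸ hsum]
  have h35 : ((3:ℝ)/5) ^ n = (r ^ n) ^ 2 := by
    rw [← r_sq, ← pow_mul, ← pow_mul, Nat.mul_comm]
  calc |u (Phi w (sierA j)) - u (Phi w (sierA i))|
      = Real.sqrt ((u (Phi w (sierA j)) - u (Phi w (sierA i))) ^ 2) :=
        (Real.sqrt_sq_eq_abs _).symm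
    _ ≤ Real.sqrt (2 * (3/5 : ℝ) ^ n * S) := Real.sqrt_le_sqrt hb
    _ = Real.sqrt 2 * Real.sqrt S * r ^ n := by
        rw [mul_assoc, Real.sqrt_mul (by norm_num : (0:ℝ) ≤ 2),
          Real.sqrt_mul (by positivity : (0:ℝ) ≤ (3/5:ℝ) ^ n) S, h35,
          Real.sqrt_sq (pow_nonneg r_nonneg n)]
        ring

lemma osc_corner {u : Pt → ℝ} {S : ℝ} (hES : ∀ n, En n u ≤ S)
    (w : List (Fin 3)) (i j : Fin 3) :
    |u (Phi w (sierA j)) - u (Phi w (sierA i))| ≤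
      Real.sqrt 2 * Real.sqrt S * r ^ w.length := by
  by_cases hij : i = j
  · subst hij
    simp only [sub_self, abs_zero]
    exact mul_nonneg (mul_nonneg (Real.sqrt_nonneg _) (Real.sqrt_nonneg _))
      (pow_nonneg r_nonneg _)
  · exact edge_osc hES w hij

/-! ### towers -/

def vidx (w : List (Fin 3)) (j : Fin 3) (k : ℕ) : Fin 3 :=
  if h : k < w.length then w.get ⟨k, h⟩ else j

def vert (w : List (Fin 3)) (j : Fin 3) (k : ℕ) : Pt :=
  Phi (w.take k) (sierA (vidx w j k))

lemma vert_top (w : List (Fin 3)) (j : Fin 3) : vert w j w.length = Phi w (sierA j) := by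
  unfold vert vidx
  rw [List.take_length, dif_neg (lt_irrefl _)]

lemma vert_eq_succ {w : List (Fin 3)} {k : ℕ} (j : Fin 3) (hk : k < w.length) :
    vert w j k = Phi (w.take (k+1)) (sierA (w.get ⟨k, hk⟩)) := by
  unfold vert vidx
  rw [dif_pos hk]
  have hts : w.take (k+1) = w.take k ++ [w.get ⟨k, hk⟩] := by
    rw [List.take_succ]
    simp [List.getElem?_eq_getElem hk]
  rw [hts, Phi_append, Phi_cons, Phi_nil, ctr_fix]

lemma osc_vert_step {u : Pt → ℝ} {S : ℝ} (hES : ∀ n, En n u ≤ S)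
    (w : List (Fin 3)) (j : Fin 3) {k : ℕ} (hk : k < w.length) :
    |u (vert w j (k+1)) - u (vert w j k)| ≤ Real.sqrt 2 * Real.sqrt S * r ^ (k+1) := by
  have h1 := vert_eq_succ j hk
  have h2 : vert w j (k+1) = Phi (w.take (k+1)) (sierA (vidx w j (k+1))) := rfl
  have hlen : (w.take (k+1)).length = k + 1 := by
    rw [List.length_take]; exact min_eq_left hk
  have h := osc_corner hES (w.take (k+1)) (w.get ⟨k, hk⟩) (vidx w j (k+1))
  rw [hlen] at h
  rw [h1, h2]
  exact h

lemma tele {u : Pt → ℝ} {S : ℝ} (hES : ∀ n, En n u ≤ S)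
    (w : List (Fin 3)) (j : Fin 3) :
    ∀ m, m ≤ w.length → ∀ n, n ≤ m →
      |u (vert w j m) - u (vert w j n)| ≤
        Real.sqrt 2 * Real.sqrt S * ∑ k ∈ Finset.Ico n m, r ^ (k+1) := by
  intro m
  induction m with
  | zero =>
    intro _ n hn
    have : n = 0 := Nat.le_zero.mp hn
    subst this
    simp
  | succ m ih =>
    intro hm n hn
    rcases Nat.eq_or_lt_of_le hn with he | hlt
    · subst he
      simp
    · have hn' : n ≤ m := Nat.lt_succ_iff.mp hlt
      have h1 := ih (le_trans (Nat.le_succ m) hm) n hn'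
      have h2 := osc_vert_step hES w j (Nat.lt_of_succ_le hm)
      have htri : |u (vert w j (m+1)) - u (vert w j n)| ≤
          |u (vert w j (m+1)) - u (vert w j m)| + |u (vert w j m) - u (vert w j n)| :=
        abs_sub_le _ _ _
      have hsum : ∑ k ∈ Finset.Ico n (m+1), r ^ (k+1)
          = (∑ k ∈ Finset.Ico n m, r ^ (k+1)) + r ^ (m+1) :=
        Finset.sum_Ico_succ_top hn' _
      rw [hsum]
      calc |u (vert w j (m+1)) - u (vert w j n)|
          ≤ |u (vert w j (m+1)) - u (vert w j m)| + |u (vert w j m) - u (vert w j n)| := htri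
        _ ≤ Real.sqrt 2 * Real.sqrt S * r ^ (m+1) +
            Real.sqrt 2 * Real.sqrt S * ∑ k ∈ Finset.Ico n m, r ^ (k+1) := by
            exact add_le_add h2 h1
        _ = Real.sqrt 2 * Real.sqrt S *
            ((∑ k ∈ Finset.Ico n m, r ^ (k+1)) + r ^ (m+1)) := by ring

lemma geo' : ∀ m n : ℕ, n ≤ m →
    ∑ k ∈ Finset.Ico n m, r ^ (k+1) ≤ 5 * (r ^ (n+1) - r ^ (m+1)) := by
  intro m
  induction m with
  | zero =>
    intro n hn
    have : n = 0 := Nat.le_zero.mp hn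
    subst this
    simp
  | succ m ih =>
    intro n hn
    rcases Nat.eq_or_lt_of_le hn with he | hlt
    · subst he
      simp
    · have hn' : n ≤ m := Nat.lt_succ_iff.mp hlt
      have h1 := ih n hn'
      rw [Finset.sum_Ico_succ_top hn']
      have h2 : r * r ^ (m+1) ≤ 4/5 * r ^ (m+1) :=
        mul_le_mul_of_nonneg_right r_le (pow_nonneg r_nonneg _)
      have h3 : r ^ (m+2) = r * r ^ (m+1) := by ring
      linarith [h1, h2, h3 ▸ h2]

lemma geo (n m : ℕ) : ∑ k ∈ Finset.Ico n m, r ^ (k+1) ≤ 5 * r ^ (n+1) := by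
  by_cases h : n ≤ m
  · have := geo' m n h
    have h0 : 0 ≤ r ^ (m+1) := pow_nonneg r_nonneg _
    linarith
  · rw [Finset.Ico_eq_empty (by omega)]
    rw [Finset.sum_empty]
    exact mul_nonneg (by norm_num) (pow_nonneg r_nonneg _)

lemma osc_tower {u : Pt → ℝ} {S : ℝ} (hES : ∀ n, En n u ≤ S)
    (w : List (Fin 3)) (j : Fin 3) {n : ℕ} (hn : n ≤ w.length) :
    |u (Phi w (sierA j)) - u (vert w j n)| ≤
      Real.sqrt 2 * Real.sqrt S * (5 * r ^ (n+1)) := by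
  have h := tele hES w j w.length le_rfl n hn
  rw [vert_top] at h
  have hB : (0:ℝ) ≤ Real.sqrt 2 * Real.sqrt S := by positivity
  calc |u (Phi w (sierA j)) - u (vert w j n)|
      ≤ Real.sqrt 2 * Real.sqrt S * ∑ k ∈ Finset.Ico n w.length, r ^ (k+1) := h
    _ ≤ Real.sqrt 2 * Real.sqrt S * (5 * r ^ (n+1)) :=
        mul_le_mul_of_nonneg_left (geo n w.length) hB

lemma d2_tower (w : List (Fin 3)) (j : Fin 3) {n : ℕ} (hn : n ≤ w.length) :
    d2 (Phi w (sierA j)) (vert w j n) ≤ (1/4 : ℝ) ^ n := by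
  have hsplit : Phi w (sierA j) = Phi (w.take n) (Phi (w.drop n) (sierA j)) := by
    rw [← Phi_append, List.take_append_drop]
  unfold vert
  rw [hsplit, d2_Phi]
  have hlen : (w.take n).length = n := by rw [List.length_take]; exact min_eq_left hn
  rw [hlen]
  have hd := diam_T (Phi_mem_T (w.drop n) (sierA_mem_T j)) (sierA_mem_T (vidx w j n))
  have h4 : ((1:ℝ)/4) ^ n = 1 / 4 ^ n := by rw [div_pow]; norm_num
  rw [h4]
  gcongr

/-! ### euclidean distance facts -/

lemma eucl_sq (x y : Pt) : eucl x y ^ 2 = d2 x y :=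
  Real.sq_sqrt (d2_nonneg x y)

lemma eucl_nonneg (x y : Pt) : 0 ≤ eucl x y := Real.sqrt_nonneg _

def emb (p : Pt) : EuclideanSpace ℝ (Fin 2) := WithLp.toLp 2 ![p.1, p.2]

lemma eucl_eq_dist (x y : Pt) : eucl x y = dist (emb x) (emb y) := by
  unfold eucl emb
  rw [EuclideanSpace.dist_eq, Fin.sum_univ_two]
  simp only [PiLp.toLp_apply, Matrix.cons_val_zero, Matrix.cons_val_one, Matrix.head_cons,
    Real.dist_eq, sq_abs]
  congr 1
  ring

lemma eucl_tri (x y z : Pt) : eucl x z ≤ eucl x y + eucl y z := by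
  rw [eucl_eq_dist, eucl_eq_dist, eucl_eq_dist]
  exact dist_triangle _ _ _

lemma eucl_pos {x y : Pt} (h : x ≠ y) : 0 < eucl x y := by
  rw [eucl_eq_sqrt_d2]
  apply Real.sqrt_pos.mpr
  rcases lt_or_eq_of_le (d2_nonneg x y) with hlt | heq
  · exact hlt
  · exfalso
    apply h
    have hs1 := sq_nonneg (y.1 - x.1)
    have hs2 := sq_nonneg (y.2 - x.2)
    unfold d2 at heq
    have e1 : y.1 = x.1 := by nlinarith
    have e2 : y.2 = x.2 := by nlinarith
    exact Prod.ext e1.symm e2.symm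

/-! ### exponent facts -/

lemma log2_pos : (0:ℝ) < Real.log 2 := Real.log_pos (by norm_num)

lemma alpha_pos : 0 < Real.log (5/3) / (2 * Real.log 2) :=
  div_pos (Real.log_pos (by norm_num)) (by linarith [log2_pos])

lemma half_rpow_alpha : (1/2 : ℝ) ^ (Real.log (5/3) / (2 * Real.log 2)) = r := by
  set al := Real.log (5/3) / (2 * Real.log 2) with hal
  have hb : (0:ℝ) < 1/2 := by norm_num
  have hsq : ((1/2 : ℝ) ^ al) ^ (2:ℕ) = 3/5 := by
    rw [← Real.rpow_natCast ((1/2 : ℝ) ^ al) 2, ← Real.rpow_mul (le_of_lt hb)]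
    have h2 : al * (2:ℕ) = Real.log (5/3) / Real.log 2 := by
      rw [hal]; push_cast; field_simp
    rw [h2, Real.rpow_def_of_pos hb]
    have hlh : Real.log (1/2) = -Real.log 2 := by
      rw [one_div, Real.log_inv]
    rw [hlh]
    have : -Real.log 2 * (Real.log (5/3) / Real.log 2) = -Real.log (5/3) := by
      field_simp
    rw [this, Real.exp_neg, Real.exp_log (by norm_num : (0:ℝ) < 5/3)]
    norm_num
  have hnn : 0 ≤ (1/2 : ℝ) ^ al := le_of_lt (Real.rpow_pos_of_pos hb al)
  have := Real.sqrt_sq hnn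
  rw [← this, hsq]
  rfl

lemma pow_half_rpow (n : ℕ) (d : ℝ) (hd : 0 < d)
    (h : (1/2 : ℝ) ^ (n+1) < d) :
    r ^ (n+1) < d ^ (Real.log (5/3) / (2 * Real.log 2)) := by
  set al := Real.log (5/3) / (2 * Real.log 2) with hal
  have h0 : (0:ℝ) ≤ (1/2 : ℝ) ^ (n+1) := by positivity
  have hlt := Real.rpow_lt_rpow h0 h alpha_pos
  have hL : (((1/2 : ℝ)) ^ (n+1 : ℕ)) ^ al = r ^ (n+1 : ℕ) := by
    rw [← Real.rpow_natCast (1/2 : ℝ) (n+1), ← Real.rpow_mul (by norm_num : (0:ℝ) ≤ 1/2),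
      mul_comm, Real.rpow_mul (by norm_num : (0:ℝ) ≤ 1/2), Real.rpow_natCast, half_rpow_alpha]
  rw [hL] at hlt
  exact hlt

lemma sqrt2_le : Real.sqrt 2 ≤ 3/2 := by
  nlinarith [Real.sq_sqrt (show (0:ℝ) ≤ 2 by norm_num), Real.sqrt_nonneg 2,
    sq_nonneg (Real.sqrt 2 - 3/2)]

end SG

open SG

/-- Hölder estimate: there is a universal constant `c > 0` such that for every
`u : V* → ℝ` with `E(u,u) = sup_n E_n(u,u) < ∞` and all distinct `x, y ∈ V*`,
`|u y − u x| ≤ c E(u,u)^{1/2} |y − x|^α` with `α = log(5/3)/(2 log 2)`. -/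
theorem holder_estimate :
    ∃ c : ℝ, 0 < c ∧
      ∀ u : Pt → ℝ, BddAbove (Set.range fun n => En n u) →
        ∀ x ∈ Vstar, ∀ y ∈ Vstar, x ≠ y →
          |u y - u x| ≤
            c * Real.sqrt (sSup (Set.range fun n => En n u)) *
              eucl x y ^ (Real.log (5 / 3) / (2 * Real.log 2)) := by
  refine ⟨25, by norm_num, ?_⟩
  intro u hbdd x hx y hy hxy
  set S : ℝ := sSup (Set.range fun n => En n u) with hSdef
  have hES : ∀ n, En n u ≤ S := fun n => le_csSup hbdd ⟨n, rfl⟩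
  have hS0 : 0 ≤ S := le_trans (En_nonneg 0 u) (hES 0)
  have hSqrtS : 0 ≤ Real.sqrt S := Real.sqrt_nonneg S
  have hd_pos : 0 < eucl x y := eucl_pos hxy
  set d : ℝ := eucl x y with hddef
  set al : ℝ := Real.log (5/3) / (2 * Real.log 2) with haldef
  have hd_al : 0 ≤ d ^ al := Real.rpow_nonneg hd_pos.le al
  -- choose the scale n
  have hex : ∃ k : ℕ, (1/2 : ℝ) ^ (k+1) < d := by
    obtain ⟨k, hk⟩ := exists_pow_lt_of_lt_one hd_pos (by norm_num : (1/2 : ℝ) < 1)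
    refine ⟨k, lt_of_le_of_lt ?_ hk⟩
    exact pow_le_pow_of_le_one (by norm_num) (by norm_num) (Nat.le_succ k)
  obtain ⟨n, hn1, hn0⟩ : ∃ n : ℕ, (1/2 : ℝ) ^ (n+1) < d ∧ (n = 0 ∨ d ≤ (1/2 : ℝ) ^ n) := by
    refine ⟨Nat.find hex, Nat.find_spec hex, ?_⟩
    rcases Nat.eq_zero_or_pos (Nat.find hex) with h0 | hpos
    · exact Or.inl h0
    · right
      have hmin := Nat.find_min hex (m := Nat.find hex - 1) (by omega)
      have he : Nat.find hex - 1 + 1 = Nat.find hex := by omega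
      rw [he] at hmin
      exact not_lt.mp hmin
  -- words for x and y
  obtain ⟨wx, jx, hwx_len, hxw⟩ := exists_long_word hx (n - 1)
  obtain ⟨wy, jy, hwy_len, hyw⟩ := exists_long_word hy (n - 1)
  have hlenx : (wx.take (n-1)).length = n - 1 := by
    rw [List.length_take]; exact min_eq_left hwx_len
  have hleny : (wy.take (n-1)).length = n - 1 := by
    rw [List.length_take]; exact min_eq_left hwy_len
  -- common corner of the two level-(n-1) cells
  have hcc : ∃ i i', Phi (wx.take (n-1)) (sierA i) = Phi (wy.take (n-1)) (sierA i') := by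
    cases n with
    | zero => exact ⟨0, 0, rfl⟩
    | succ m =>
      rcases hn0 with h0 | hd_le
      · exact absurd h0 (Nat.succ_ne_zero m)
      · simp only [Nat.add_sub_cancel] at hwx_len hwy_len hlenx hleny ⊢
        have hxsplit : x = Phi (wx.take m) (Phi (wx.drop m) (sierA jx)) := by
          rw [← Phi_append, List.take_append_drop]; exact hxw
        have hysplit : y = Phi (wy.take m) (Phi (wy.drop m) (sierA jy)) := by
          rw [← Phi_append, List.take_append_drop]; exact hyw
        have hthresh : d2 x y < 3/4 * (1/4 : ℝ) ^ ((wx.take m).length) := by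
          rw [hlenx]
          have hd2 : d2 x y = d ^ 2 := (eucl_sq x y).symm
          have hsqle : d ^ 2 ≤ ((1/2 : ℝ) ^ (m+1)) ^ 2 :=
            pow_le_pow_left₀ hd_pos.le hd_le 2
          have heq4 : (((1:ℝ)/2) ^ (m+1)) ^ 2 = (1/4 : ℝ) ^ (m+1) := by
            rw [← pow_mul, mul_comm, pow_mul]; norm_num
          have hps : ((1:ℝ)/4) ^ (m+1) = (1/4 : ℝ) ^ m * (1/4) := pow_succ _ _
          have hpos4 : (0:ℝ) < (1/4 : ℝ) ^ m := by positivity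
          rw [hd2]
          calc d ^ 2 ≤ ((1/2 : ℝ) ^ (m+1)) ^ 2 := hsqle
            _ = (1/4 : ℝ) ^ (m+1) := heq4
            _ < 3/4 * (1/4 : ℝ) ^ m := by rw [hps]; nlinarith [hpos4]
        have := sep_cells (wx.take m) (wy.take m)
          (by rw [hlenx, hleny])
          (Phi_mem_T (wx.drop m) (sierA_mem_T jx))
          (Phi_mem_T (wy.drop m) (sierA_mem_T jy))
          (by rw [← hxsplit, ← hysplit]; exact hthresh)
        exact this
  obtain ⟨i, i', hv⟩ := hcc
  -- oscillation bounds
  have hvert_x : vert wx jx (n-1) = Phi (wx.take (n-1)) (sierA (vidx wx jx (n-1))) := rfl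
  have hvert_y : vert wy jy (n-1) = Phi (wy.take (n-1)) (sierA (vidx wy jy (n-1))) := rfl
  have t1 : |u x - u (vert wx jx (n-1))| ≤
      Real.sqrt 2 * Real.sqrt S * (5 * r ^ ((n-1)+1)) := by
    rw [hxw]; exact osc_tower hES wx jx hwx_len
  have t4 : |u y - u (vert wy jy (n-1))| ≤
      Real.sqrt 2 * Real.sqrt S * (5 * r ^ ((n-1)+1)) := by
    rw [hyw]; exact osc_tower hES wy jy hwy_len
  have t2 : |u (Phi (wx.take (n-1)) (sierA i)) - u (vert wx jx (n-1))| ≤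
      Real.sqrt 2 * Real.sqrt S * r ^ (n-1) := by
    rw [hvert_x]
    have h := osc_corner hES (wx.take (n-1)) (vidx wx jx (n-1)) i
    rw [hlenx] at h
    exact h
  have t3 : |u (Phi (wy.take (n-1)) (sierA i')) - u (vert wy jy (n-1))| ≤
      Real.sqrt 2 * Real.sqrt S * r ^ (n-1) := by
    rw [hvert_y]
    have h := osc_corner hES (wy.take (n-1)) (vidx wy jy (n-1)) i'
    rw [hleny] at h
    exact h
  rw [hv] at t2
  -- assemble the chain
  have habs : |u y - u x| ≤
      |u y - u (vert wy jy (n-1))| +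
      |u (vert wy jy (n-1)) - u (Phi (wy.take (n-1)) (sierA i'))| +
      |u (Phi (wy.take (n-1)) (sierA i')) - u (vert wx jx (n-1))| +
      |u (vert wx jx (n-1)) - u x| := by
    have h1 := abs_sub_le (u y) (u (vert wy jy (n-1))) (u x)
    have h2 := abs_sub_le (u (vert wy jy (n-1))) (u (Phi (wy.take (n-1)) (sierA i'))) (u x)
    have h3 := abs_sub_le (u (Phi (wy.take (n-1)) (sierA i'))) (u (vert wx jx (n-1))) (u x)
    linarith
  rw [abs_sub_comm (u (vert wy jy (n-1))) (u (Phi (wy.take (n-1)) (sierA i')))] at habs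
  rw [abs_sub_comm (u (vert wx jx (n-1))) (u x)] at habs
  have hchain : |u y - u x| ≤
      Real.sqrt 2 * Real.sqrt S * (10 * r ^ ((n-1)+1) + 2 * r ^ (n-1)) := by
    have := habs
    nlinarith [t1, t2, t3, t4, this]
  -- numeric bounds
  have hB : 0 ≤ Real.sqrt 2 * Real.sqrt S :=
    mul_nonneg (Real.sqrt_nonneg 2) hSqrtS
  have hrl_nn : 0 ≤ r ^ (n-1) := pow_nonneg r_nonneg _
  have hstep1 : 10 * r ^ ((n-1)+1) + 2 * r ^ (n-1) ≤ 10 * r ^ (n-1) := by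
    have h := mul_le_mul_of_nonneg_right r_le hrl_nn
    have he : r ^ ((n-1)+1) = r * r ^ (n-1) := by ring
    rw [he]
    linarith
  have hstep2 : r ^ (n-1) ≤ 5/3 * r ^ (n+1) := by
    cases n with
    | zero =>
      have : (0:ℕ) - 1 = 0 := rfl
      rw [this, pow_zero, pow_one]
      linarith [r_ge]
    | succ m =>
      have h1 : (m+1) - 1 = m := rfl
      rw [h1]
      have h2 : r ^ (m+1+1) = r ^ 2 * r ^ m := by ring
      rw [h2, r_sq]
      have : (5:ℝ)/3 * (3/5 * r ^ m) = r ^ m := by ring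
      rw [this]
  have hda : r ^ (n+1) < d ^ al := by
    rw [haldef]
    exact pow_half_rpow n d hd_pos hn1
  -- final combination
  have hfin1 : |u y - u x| ≤ Real.sqrt 2 * Real.sqrt S * (10 * r ^ (n-1)) :=
    le_trans hchain (mul_le_mul_of_nonneg_left hstep1 hB)
  have hfin2 : Real.sqrt 2 * Real.sqrt S * (10 * r ^ (n-1)) ≤
      Real.sqrt 2 * Real.sqrt S * (50/3 * r ^ (n+1)) := by
    apply mul_le_mul_of_nonneg_left _ hB
    linarith [hstep2]
  have hfin3 : Real.sqrt 2 * Real.sqrt S * (50/3 * r ^ (n+1)) ≤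
      Real.sqrt 2 * Real.sqrt S * (50/3 * d ^ al) := by
    apply mul_le_mul_of_nonneg_left _ hB
    linarith [hda]
  have hfin4 : Real.sqrt 2 * Real.sqrt S * (50/3 * d ^ al) ≤ 25 * Real.sqrt S * d ^ al := by
    have hs2 : Real.sqrt 2 * Real.sqrt S ≤ 3/2 * Real.sqrt S :=
      mul_le_mul_of_nonneg_right sqrt2_le hSqrtS
    have hnn : (0:ℝ) ≤ 50/3 * d ^ al := by positivity
    calc Real.sqrt 2 * Real.sqrt S * (50/3 * d ^ al)
        ≤ 3/2 * Real.sqrt S * (50/3 * d ^ al) := mul_le_mul_of_nonneg_right hs2 hnn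
      _ = 25 * Real.sqrt S * d ^ al := by ring
  linarith


end
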